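/- Let κ be a regular uncountable cardinal, and for each γ with κ ≤ γ < κ⁺ let π_γ : κ → γ be a bijection. Suppose x ⊆ κ⁺ satisfies: (i) x ∩ κ is an ordinal of cofinality ω₁; (ii) for all α < β in x with β ≥ κ, lim(π_β``(π_β⁻¹(α))) ⊆ x; (iii) sup x has cofinality ω₁. Then x is σ-closed, i.e. for every b ⊆ x of order type ω with sup b < sup x, sup b ∈ x. -/

import Mathlib

set_option autoImplicit false

open Cardinal Set

/-- `lim A`: the set of ordinals `γ > 0` with `sup (A ∩ γ) = γ`. -/
def limPts (A : Set Ordinal.{0}) : Set Ordinal.{0} :=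
  {γ | γ ≠ 0 ∧ sSup (A ∩ Set.Iio γ) = γ}

private lemma nat_iSup_lt {f : ℕ → Ordinal.{0}} {o : Ordinal.{0}}
    (ho : Cardinal.aleph0 < o.cof) (hf : ∀ n, f n < o) : (⨆ n, f n) < o :=
  Ordinal.iSup_lt_ord (by rw [Cardinal.mk_nat]; exact ho) hf

/-- Let `κ` be regular uncountable, and for `κ ≤ γ < κ⁺` let `π γ : κ → γ` be a bijection
with inverse `σ γ`.  If `x ⊆ κ⁺` satisfies (i) `x ∩ κ` is an ordinal `δ` of cofinality `ω₁`,
(ii) for all `α < β` in `x` with `β ≥ κ`, `lim (π β `` (σ β α)) ⊆ x`, and (iii) `sup x` has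
cofinality `ω₁`, then `x` is `σ`-closed: the supremum of every subset of `x` of order
type `ω` lying below `sup x` belongs to `x`. -/
theorem sigma_closed (κ : Cardinal.{0})
    (hκ : κ.IsRegular) (hκu : Cardinal.aleph0 < κ)
    (π σ : Ordinal.{0} → Ordinal.{0} → Ordinal.{0})
    (hbij : ∀ γ, κ.ord ≤ γ → γ < (Order.succ κ).ord →
      Set.BijOn (π γ) (Set.Iio κ.ord) (Set.Iio γ))
    (hinv : ∀ γ, κ.ord ≤ γ → γ < (Order.succ κ).ord → ∀ ξ < κ.ord, σ γ (π γ ξ) = ξ)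
    (x : Set Ordinal.{0}) (hx : x ⊆ Set.Iio (Order.succ κ).ord)
    (δ : Ordinal.{0}) (hδ : x ∩ Set.Iio κ.ord = Set.Iio δ)
    (hδcof : δ.cof = Cardinal.aleph 1)
    (hlim : ∀ α ∈ x, ∀ β ∈ x, α < β → κ.ord ≤ β →
      limPts (π β '' Set.Iio (σ β α)) ⊆ x)
    (hsup : (sSup x).cof = Cardinal.aleph 1) :
    ∀ b : ℕ → Ordinal.{0}, StrictMono b → (∀ n, b n ∈ x) →
      (⨆ n, b n) < sSup x → (⨆ n, b n) ∈ x := by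
  intro b hb hbx hlt
  set s := ⨆ n, b n with hsdef
  have hbdd : BddAbove (Set.range b) := Ordinal.bddAbove_range b
  have hbns : ∀ n, b n < s := fun n =>
    lt_of_lt_of_le (hb (Nat.lt_succ_self n)) (le_ciSup hbdd (n + 1))
  have hIioδ : Set.Iio δ ⊆ x := by
    rw [← hδ]; exact Set.inter_subset_left
  have hδκ : δ ≤ κ.ord := by
    by_contra h
    push_neg at h
    have h2 : κ.ord ∈ x ∩ Set.Iio κ.ord := by rw [hδ]; exact h
    exact lt_irrefl κ.ord h2.2
  have haleph : Cardinal.aleph0 < Cardinal.aleph 1 := Cardinal.aleph0_lt_aleph_one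
  have hδcof' : Cardinal.aleph0 < δ.cof := by rw [hδcof]; exact haleph
  have hδlim : Order.IsSuccLimit δ := by
    rw [← Ordinal.aleph0_le_cof]; exact hδcof'.le
  by_cases hsκ : s < κ.ord
  · -- all `b n` lie below `δ`, and the sup of countably many ordinals below `δ` is below `δ`
    have hbδ : ∀ n, b n < δ := fun n => by
      have h2 : b n ∈ x ∩ Set.Iio κ.ord := ⟨hbx n, lt_trans (hbns n) hsκ⟩
      rw [hδ] at h2; exact h2
    exact hIioδ (nat_iSup_lt hδcof' hbδ)
  · -- main case : `κ.ord ≤ s`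
    have hκs : κ.ord ≤ s := not_lt.mp hsκ
    obtain ⟨β, hβx, hsβ⟩ := exists_lt_of_lt_csSup ⟨b 0, hbx 0⟩ hlt
    have hβκ : κ.ord ≤ β := le_trans hκs hsβ.le
    have hβsucc : β < (Order.succ κ).ord := hx hβx
    have hπ := hbij β hβκ hβsucc
    have hσπ := hinv β hβκ hβsucc
    have hπσ : ∀ γ < β, π β (σ β γ) = γ ∧ σ β γ < κ.ord := by
      intro γ hγ
      obtain ⟨ν, hν, hνγ⟩ := hπ.surjOn hγ
      have h1 : σ β γ = ν := by rw [← hνγ, hσπ ν hν]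
      exact ⟨by rw [h1, hνγ], h1 ▸ hν⟩
    set ξ : ℕ → Ordinal.{0} := fun n => σ β (b n) with hξdef
    have hbnβ : ∀ n, b n < β := fun n => (hbns n).trans hsβ
    have hπbn : ∀ n, π β (ξ n) = b n := fun n => (hπσ _ (hbnβ n)).1
    have hξκ : ∀ n, ξ n < κ.ord := fun n => (hπσ _ (hbnβ n)).2
    by_cases hgood : ∃ α ∈ x, α < β ∧ {n | ξ n < σ β α}.Infinite
    · -- good case : `s` is a limit point of `π β '' Iio (σ β α)`
      obtain ⟨α, hαx, hαβ, hinf⟩ := hgood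
      apply hlim α hαx β hβx hαβ hβκ
      constructor
      · exact (lt_of_le_of_lt zero_le (hbns 0)).ne'
      · apply le_antisymm
        · apply csSup_le'
          rintro t ⟨-, ht⟩
          exact le_of_lt ht
        · apply ciSup_le
          intro m
          obtain ⟨n, hnI, hmn⟩ := hinf.exists_gt m
          have hmem : b n ∈ π β '' Set.Iio (σ β α) ∩ Set.Iio s :=
            ⟨⟨ξ n, hnI, hπbn n⟩, hbns n⟩
          exact le_trans (hb hmn).le
            (le_csSup (BddAbove.mono Set.inter_subset_right bddAbove_Iio) hmem)
    · -- bad case : derive a contradiction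
      exfalso
      push_neg at hgood
      have hbadfin : ∀ α ∈ x, α < β → {n | ξ n < σ β α}.Finite := by
        intro α h1 h2
        exact hgood α h1 h2
      have key : ∀ α ∈ x, α < β → ∃ n, σ β α < ξ n := by
        intro α hαx hαβ
        by_contra h
        push_neg at h
        have hsub : {n | ξ n = σ β α}.Subsingleton := by
          intro n hn m hm
          apply hb.injective
          have hnm : ξ n = ξ m := by
            rw [Set.mem_setOf_eq] at hn hm; rw [hn, hm]
          rw [← hπbn n, ← hπbn m, hnm]
        have hcompl : {n | ξ n < σ β α} = {n | ξ n = σ β α}ᶜ := by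
          ext n
          simp only [Set.mem_setOf_eq, Set.mem_compl_iff]
          constructor
          · intro h1 h2
            rw [h2] at h1
            exact lt_irrefl _ h1
          · intro h1
            exact lt_of_le_of_ne (h n) h1
        have : {n | ξ n < σ β α}.Infinite := by
          rw [hcompl]
          exact (hsub.finite).infinite_compl
        exact this (hbadfin α hαx hαβ)
      by_cases hδeq : δ = κ.ord
      · -- `δ = κ` : cardinality contradiction, `σ β` injects `Iio κ.ord` into `Iio η`
        set η := ⨆ n, ξ n with hηdef
        have hη : η < κ.ord := nat_iSup_lt (by rw [hκ.cof_eq]; exact hκu) hξκ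
        have himg : ∀ α ∈ Set.Iio κ.ord, σ β α < η := by
          intro α hα
          have hαδ : α < δ := by rw [hδeq]; exact hα
          obtain ⟨n, hn⟩ := key α (hIioδ hαδ) (lt_of_lt_of_le hα hβκ)
          exact hn.trans_le (le_ciSup (Ordinal.bddAbove_range ξ) n)
        have hinj : Set.InjOn (σ β) (Set.Iio κ.ord) := by
          intro a ha a' ha' hab
          rw [← (hπσ a (lt_of_lt_of_le ha hβκ)).1, ← (hπσ a' (lt_of_lt_of_le ha' hβκ)).1, hab]
        have h1 : #(Set.Iio κ.ord) = #(σ β '' Set.Iio κ.ord) :=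
          (Cardinal.mk_image_eq_of_injOn _ _ hinj).symm
        have h2 : σ β '' Set.Iio κ.ord ⊆ Set.Iio η := by
          rintro t ⟨α, hα, rfl⟩
          exact himg α hα
        have h3 : #(Set.Iio κ.ord) ≤ #(Set.Iio η) := h1 ▸ Cardinal.mk_le_mk_of_subset h2
        rw [Ordinal.mk_Iio_ordinal, Ordinal.mk_Iio_ordinal] at h3
        have h4 : κ.ord.card ≤ η.card := Cardinal.lift_le.mp h3
        rw [Cardinal.card_ord] at h4
        exact absurd (Cardinal.lt_ord.mp hη) (not_lt.mpr h4)
      · -- `δ < κ` : then `δ` itself is a limit point of some `π β '' Iio (ξ n)`, so `δ ∈ x`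
        have hδκ' : δ < κ.ord := lt_of_le_of_ne hδκ hδeq
        have hδβ : δ < β := lt_of_le_of_lt (hδκ'.le.trans hκs) hsβ
        have hex : ∃ n, sSup (π β '' Set.Iio (ξ n) ∩ Set.Iio δ) = δ := by
          by_contra h
          push_neg at h
          have hub : ∀ n, sSup (π β '' Set.Iio (ξ n) ∩ Set.Iio δ) < δ := by
            intro n
            refine lt_of_le_of_ne ?_ (h n)
            apply csSup_le'
            rintro t ⟨-, ht⟩
            exact le_of_lt ht
          set u := ⨆ n, sSup (π β '' Set.Iio (ξ n) ∩ Set.Iio δ) with hudef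
          have hu : u < δ := nat_iSup_lt hδcof' hub
          have hu1 : Order.succ u < δ := hδlim.succ_lt hu
          obtain ⟨n, hn⟩ := key (Order.succ u) (hIioδ hu1) (hu1.trans hδβ)
          have hmem : Order.succ u ∈ π β '' Set.Iio (ξ n) ∩ Set.Iio δ :=
            ⟨⟨σ β (Order.succ u), hn, (hπσ _ (hu1.trans hδβ)).1⟩, hu1⟩
          have h5 : Order.succ u ≤ u :=
            le_trans (le_csSup (BddAbove.mono Set.inter_subset_right bddAbove_Iio) hmem)
              (le_ciSup (Ordinal.bddAbove_range _) n)
          exact absurd h5 (not_le.mpr (Order.lt_succ u))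
        obtain ⟨n₀, hn₀⟩ := hex
        have hδx : δ ∈ x := by
          apply hlim (b n₀) (hbx n₀) β hβx (hbnβ n₀) hβκ
          exact ⟨hδlim.pos.ne', hn₀⟩
        have h6 : δ ∈ x ∩ Set.Iio κ.ord := ⟨hδx, hδκ'⟩
        rw [hδ] at h6
        exact lt_irrefl δ h6
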